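/- For every α ∈ ℝ, define the 2×2 real matrices F_L(α) := (cosh(2α))^(−1/2) • ![![1, sinh(2α)], ![0, cosh(2α)]], V(α) := ![![cosh α, sinh α], ![sinh α, cosh α]], and R(α) := (cosh(2α))^(−1/2) • ![![cosh α, sinh α], ![−sinh α, cosh α]]. Then: (i) F_L(α) = V(α)·R(α); (ii) R(α)·R(α)ᵀ = 1 and det R(α) = 1; (iii) V(α) is symmetric and positive definite; (iv) det F_L(α) = 1. -/

import Mathlib

open Matrix Real

/-- Left polar decomposition of the LFSS deformation gradient (Eqs. (3-8)–(3-10)):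
`F_L = V·R` with `R` a rotation, `V` symmetric positive definite, and `det F_L = 1`. -/
theorem lfss_polar_decomposition (α : ℝ) :
    let F_L : Matrix (Fin 2) (Fin 2) ℝ :=
      (Real.sqrt (Real.cosh (2*α)))⁻¹ • !![1, Real.sinh (2*α); 0, Real.cosh (2*α)]
    let V : Matrix (Fin 2) (Fin 2) ℝ :=
      !![Real.cosh α, Real.sinh α; Real.sinh α, Real.cosh α]
    let R : Matrix (Fin 2) (Fin 2) ℝ :=
      (Real.sqrt (Real.cosh (2*α)))⁻¹ • !![Real.cosh α, Real.sinh α; -Real.sinh α, Real.cosh α]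
    F_L = V * R ∧ R * Rᵀ = 1 ∧ R.det = 1 ∧ V.IsSymm ∧ V.PosDef ∧ F_L.det = 1 := by
  intro F_L V R
  have hcosh : Real.cosh (2*α) = Real.cosh α ^ 2 + Real.sinh α ^ 2 := by
    rw [two_mul, Real.cosh_add]; ring
  have hsinh : Real.sinh (2*α) = 2 * Real.sinh α * Real.cosh α := by
    rw [two_mul, Real.sinh_add]; ring
  have hpyth : Real.cosh α ^ 2 - Real.sinh α ^ 2 = 1 := Real.cosh_sq_sub_sinh_sq α
  have hpos : 0 < Real.cosh (2*α) := Real.cosh_pos _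
  have hsq : Real.sqrt (Real.cosh (2*α)) ^ 2 = Real.cosh (2*α) :=
    Real.sq_sqrt hpos.le
  have hsqrtpos : 0 < Real.sqrt (Real.cosh (2*α)) := Real.sqrt_pos.mpr hpos
  have hsqrtne : Real.sqrt (Real.cosh (2*α)) ≠ 0 := hsqrtpos.ne'
  refine ⟨?_, ?_, ?_, ?_, ?_, ?_⟩
  · show F_L = V * R
    simp only [F_L, V, R, Matrix.mul_smul]
    congr 1
    ext i j
    fin_cases i <;> fin_cases j <;>
      simp [Matrix.mul_apply, Fin.sum_univ_succ, hcosh, hsinh] <;> nlinarith [hpyth]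
  · show R * Rᵀ = 1
    have ht : (!![Real.cosh α, Real.sinh α; -Real.sinh α, Real.cosh α] :
        Matrix (Fin 2) (Fin 2) ℝ)ᵀ = !![Real.cosh α, -Real.sinh α; Real.sinh α, Real.cosh α] := by
      ext i j; fin_cases i <;> fin_cases j <;> rfl
    simp only [R, Matrix.transpose_smul, ht, Matrix.smul_mul, Matrix.mul_smul, smul_smul,
      Matrix.mul_fin_two, Matrix.one_fin_two]
    ext i j
    fin_cases i <;> fin_cases j <;>
      · simp
        field_simp
        first
        | (right; ring)
        | nlinarith [hcosh]
  · show R.det = 1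
    simp only [R, Matrix.det_smul, Matrix.det_fin_two_of, Fintype.card_fin]
    field_simp
    nlinarith [hsq, hcosh, hpyth]
  · show V.IsSymm
    ext i j
    fin_cases i <;> fin_cases j <;> simp [V, Matrix.IsSymm]
  · show V.PosDef
    constructor
    · ext i j
      fin_cases i <;> fin_cases j <;> simp [V]
    · intro x hx
      have h0 : x 0 ≠ 0 ∨ x 1 ≠ 0 := by
        by_contra h
        push_neg at h
        apply hx
        ext i; fin_cases i <;> simp [h.1, h.2]
      have hc : 0 < Real.cosh α := Real.cosh_pos _
      simp [V, dotProduct, Matrix.mulVec, Fin.sum_univ_succ, Finsupp.sum_fintype]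
      rcases h0 with h | h <;>
        nlinarith [hpyth, hc, mul_self_pos.mpr h,
          sq_nonneg (Real.cosh α * x 0 + Real.sinh α * x 1),
          sq_nonneg (Real.sinh α * x 0 + Real.cosh α * x 1)]
  · show F_L.det = 1
    simp only [F_L, Matrix.det_smul, Matrix.det_fin_two_of, Fintype.card_fin]
    field_simp
    rw [hsq]; ring
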